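/- arXiv:1806.10760 — 2 statements merged into one kernel-verified Lean document; each statement's English description precedes it below -/
import Mathlib

section
/- With F and c as above, for each fixed L > 0 let w* = √L·√(2(k−1))/(ρ − log(1+ρ)). Then F(w*)/[2L/(ρ − log(1+ρ))] → 1 as L → ∞, i.e., the ratio of the Subspace-CUSUM expected detection delay (with optimized window) to the optimal CUSUM delay 2 log γ/(ρ − log(1+ρ)) tends to 1 as γ → ∞. -/
open Filter

/-- First-order asymptotic optimality (Theorem 1): with
`F L w = 2L/[c(w) − 1 − log c(w)] + w`, `c(w) = (1+ρ)(1 − (k−1)/(wρ))` and the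
optimized window `w* = √L·√(2(k−1))/(ρ − log(1+ρ))`, the ratio of the
Subspace-CUSUM delay `F L w*` to the optimal CUSUM delay `2L/(ρ − log(1+ρ))`
tends to 1 as `L → ∞`. -/
theorem stmt12 (k : ℕ) (hk : 2 ≤ k) (ρ : ℝ) (hρ : 0 < ρ)
    (c : ℝ → ℝ) (hc : c = fun w => (1 + ρ) * (1 - ((k : ℝ) - 1) / (w * ρ)))
    (F : ℝ → ℝ → ℝ)
    (hF : F = fun L w => 2 * L / (c w - 1 - Real.log (c w)) + w)
    (wstar : ℝ → ℝ)
    (hwstar : wstar = fun L =>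
      Real.sqrt L * Real.sqrt (2 * ((k : ℝ) - 1)) / (ρ - Real.log (1 + ρ))) :
    Tendsto (fun L => F L (wstar L) / (2 * L / (ρ - Real.log (1 + ρ))))
      atTop (nhds 1) := by
  subst hc hF hwstar
  have hk1 : (1:ℝ) ≤ (k:ℝ) - 1 := by
    have : (2:ℝ) ≤ (k:ℝ) := by exact_mod_cast hk
    linarith
  set D := ρ - Real.log (1 + ρ) with hD
  have hρ1 : (0:ℝ) < 1 + ρ := by linarith
  have hDpos : 0 < D := by
    have h := Real.log_lt_sub_one_of_pos hρ1 (by linarith)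
    rw [hD]; linarith
  set B := Real.sqrt (2 * ((k:ℝ) - 1)) with hB
  have hBpos : 0 < B := Real.sqrt_pos.2 (by linarith)
  -- wstar tends to atTop
  have hsqrt : Tendsto Real.sqrt atTop atTop :=
    tendsto_atTop_atTop_of_monotone (fun a b h => Real.sqrt_le_sqrt h)
      (fun b => ⟨max 0 b ^ 2, by
        rw [Real.sqrt_sq (le_max_left 0 b)]; exact le_max_right 0 b⟩)
  have hw : Tendsto (fun L : ℝ => Real.sqrt L * B / D) atTop atTop :=
    (hsqrt.atTop_mul_const hBpos).atTop_div_const hDpos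
  -- c ∘ wstar tends to 1 + ρ
  have hwρ : Tendsto (fun L : ℝ => Real.sqrt L * B / D * ρ) atTop atTop :=
    hw.atTop_mul_const hρ
  have hfrac : Tendsto (fun L : ℝ => ((k:ℝ) - 1) / (Real.sqrt L * B / D * ρ))
      atTop (nhds 0) := tendsto_const_nhds.div_atTop hwρ
  have hcw : Tendsto (fun L : ℝ =>
      (1 + ρ) * (1 - ((k:ℝ) - 1) / (Real.sqrt L * B / D * ρ))) atTop (nhds (1 + ρ)) := by
    have h0 : Tendsto (fun L : ℝ => 1 - ((k:ℝ) - 1) / (Real.sqrt L * B / D * ρ))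
        atTop (nhds (1 - 0)) := tendsto_const_nhds.sub hfrac
    have := h0.const_mul (1 + ρ)
    simpa using this
  have hlog : Tendsto (fun L : ℝ =>
      Real.log ((1 + ρ) * (1 - ((k:ℝ) - 1) / (Real.sqrt L * B / D * ρ))))
      atTop (nhds (Real.log (1 + ρ))) :=
    (Real.continuousAt_log hρ1.ne').tendsto.comp hcw
  set g : ℝ → ℝ := fun L =>
    (1 + ρ) * (1 - ((k:ℝ) - 1) / (Real.sqrt L * B / D * ρ)) - 1 -
      Real.log ((1 + ρ) * (1 - ((k:ℝ) - 1) / (Real.sqrt L * B / D * ρ))) with hg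
  have hgT : Tendsto g atTop (nhds D) := by
    have := (hcw.sub_const 1).sub hlog
    simpa [hD] using this
  have h1 : Tendsto (fun L : ℝ => D / g L) atTop (nhds 1) := by
    have := Tendsto.div (tendsto_const_nhds : Tendsto (fun _ : ℝ => D) atTop (nhds D))
      hgT hDpos.ne'
    rw [div_self hDpos.ne'] at this
    exact this
  have h2 : Tendsto (fun L : ℝ => B / (2 * Real.sqrt L)) atTop (nhds 0) :=
    tendsto_const_nhds.div_atTop (hsqrt.const_mul_atTop (by norm_num))
  have hmain : Tendsto (fun L : ℝ => D / g L + B / (2 * Real.sqrt L)) atTop (nhds 1) := by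
    simpa using h1.add h2
  refine hmain.congr' ?_
  filter_upwards [eventually_gt_atTop (0:ℝ)] with L hL
  have hs : 0 < Real.sqrt L := Real.sqrt_pos.2 hL
  have hLsq : Real.sqrt L * Real.sqrt L = L := Real.mul_self_sqrt hL.le
  show D / g L + B / (2 * Real.sqrt L) =
    (2 * L / g L + Real.sqrt L * B / D) / (2 * L / D)
  obtain ⟨t, ht⟩ : ∃ t, g L = t := ⟨_, rfl⟩
  rw [ht]
  have hL2 : Real.sqrt L ^ 2 = L := Real.sq_sqrt hL.le
  rcases eq_or_ne t 0 with h | h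
  · subst h
    rw [div_zero, div_zero, zero_add, zero_add, div_div_div_eq]
    field_simp
    linear_combination (-1) * hL2
  · field_simp
    linear_combination (-(t * B)) * hL2
end

section
/- With the notation of Theorem 1, the excess delay F(w*) − 2L/(ρ − log(1+ρ)) tends to infinity as L → ∞, and is Θ(√L); more precisely it equals √L · 2√(2(k−1))/(ρ − log(1+ρ)) · (1+o(1)). -/
open Filter

/-- The excess delay `F L w* − 2L/(ρ − log(1+ρ))` tends to infinity as `L → ∞`
and equals `√L·2√(2(k−1))/(ρ − log(1+ρ))·(1+o(1))` (in particular it is `Θ(√L)`). -/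
theorem stmt13 (k : ℕ) (hk : 2 ≤ k) (ρ : ℝ) (hρ : 0 < ρ)
    (c : ℝ → ℝ) (hc : c = fun w => (1 + ρ) * (1 - ((k : ℝ) - 1) / (w * ρ)))
    (F : ℝ → ℝ → ℝ)
    (hF : F = fun L w => 2 * L / (c w - 1 - Real.log (c w)) + w)
    (wstar : ℝ → ℝ)
    (hwstar : wstar = fun L =>
      Real.sqrt L * Real.sqrt (2 * ((k : ℝ) - 1)) / (ρ - Real.log (1 + ρ))) :
    Tendsto (fun L => F L (wstar L) - 2 * L / (ρ - Real.log (1 + ρ))) atTop atTop ∧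
    Tendsto (fun L =>
        (F L (wstar L) - 2 * L / (ρ - Real.log (1 + ρ))) /
          (Real.sqrt L * (2 * Real.sqrt (2 * ((k : ℝ) - 1))) / (ρ - Real.log (1 + ρ))))
      atTop (nhds 1) := by
  subst hF hc hwstar
  have hk1 : (1:ℝ) ≤ (k:ℝ) - 1 := by
    have : (2:ℝ) ≤ (k:ℝ) := by exact_mod_cast hk
    linarith
  set A : ℝ := ρ - Real.log (1 + ρ) with hAdef
  have hA : 0 < A := by
    have h1 : Real.log (1 + ρ) < (1 + ρ) - 1 :=
      Real.log_lt_sub_one_of_pos (by linarith) (by linarith)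
    have : Real.log (1 + ρ) < ρ := by linarith
    simp only [hAdef]; linarith
  set s : ℝ := Real.sqrt (2 * ((k:ℝ) - 1)) / A with hsdef
  have hsq : Real.sqrt (2 * ((k:ℝ) - 1)) ^ 2 = 2 * ((k:ℝ) - 1) :=
    Real.sq_sqrt (by linarith)
  have hs : 0 < s := div_pos (Real.sqrt_pos.2 (by linarith)) hA
  set m : ℝ := ((k:ℝ) - 1) / (s * ρ) with hmdef
  have hm : 0 < m := div_pos (by linarith) (mul_pos hs hρ)
  set h : ℝ → ℝ := fun ε => (1 + ρ) * ε + Real.log (1 - ε) with hhdef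
  set e : ℝ → ℝ := fun L => m / Real.sqrt L with hedef
  -- sqrt tends to atTop
  have hsqrt : Tendsto Real.sqrt atTop atTop := by
    refine tendsto_atTop_atTop.2 fun b => ⟨b ^ 2, fun a ha => ?_⟩
    calc b ≤ |b| := le_abs_self b
    _ = Real.sqrt (b ^ 2) := (Real.sqrt_sq_eq_abs b).symm
    _ ≤ Real.sqrt a := Real.sqrt_le_sqrt ha
  -- e tends to 0 from the right
  have he0 : Tendsto e atTop (nhds 0) := by
    simpa using tendsto_const_nhds.div_atTop (f := fun _ : ℝ => m) hsqrt
  have heε : Tendsto e atTop (nhdsWithin 0 (Set.Ioi 0)) := by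
    refine tendsto_nhdsWithin_iff.2 ⟨he0, ?_⟩
    filter_upwards [eventually_ge_atTop (1:ℝ)] with L hL
    exact div_pos hm (Real.sqrt_pos.2 (by linarith))
  -- slope limit: log(1-t)/t → -1
  have hslope : Tendsto (fun t : ℝ => Real.log (1 - t) / t)
      (nhdsWithin 0 (Set.Ioi 0)) (nhds (-1)) := by
    have hd : HasDerivAt (fun t : ℝ => Real.log (1 - t)) (-1) 0 := by
      have h1 : HasDerivAt (fun t : ℝ => 1 - t) (-1) 0 := by
        simpa using (hasDerivAt_id (0:ℝ)).const_sub 1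
      have h2 : HasDerivAt Real.log 1 ((fun t : ℝ => 1 - t) 0) := by
        simpa using Real.hasDerivAt_log one_ne_zero
      have h3 := h2.comp 0 h1
      rw [one_mul] at h3
      exact h3
    have := hasDerivAt_iff_tendsto_slope.1 hd
    have hmono : nhdsWithin (0:ℝ) (Set.Ioi 0) ≤ nhdsWithin 0 {(0:ℝ)}ᶜ :=
      nhdsWithin_mono 0 (fun x hx => ne_of_gt hx)
    refine (this.mono_left hmono).congr fun t => ?_
    simp [slope_def_field]
  -- main slope limit: h(ε)/ε → ρ
  have htendρ : Tendsto (fun ε : ℝ => h ε / ε) (nhdsWithin 0 (Set.Ioi 0)) (nhds ρ) := by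
    have hbase : Tendsto (fun ε : ℝ => (1 + ρ) + Real.log (1 - ε) / ε)
        (nhdsWithin 0 (Set.Ioi 0)) (nhds ((1 + ρ) + (-1))) :=
      tendsto_const_nhds.add hslope
    have hval : (1 + ρ) + (-1) = ρ := by ring
    rw [hval] at hbase
    refine hbase.congr' ?_
    filter_upwards [self_mem_nhdsWithin] with ε (hε : 0 < ε)
    simp only [hhdef]
    field_simp
  have hQ : Tendsto (fun L => h (e L) / e L) atTop (nhds ρ) := htendρ.comp heε
  -- h (e L) → 0
  have hcont : ContinuousAt h 0 := by
    have : ContinuousAt (fun ε : ℝ => Real.log (1 - ε)) 0 := by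
      have hlog : ContinuousAt Real.log ((fun ε : ℝ => 1 - ε) 0) := by
        simpa using Real.continuousAt_log (by norm_num : (1:ℝ) - 0 ≠ 0)
      exact hlog.comp (by fun_prop)
    exact ((continuous_const.mul continuous_id).continuousAt).add this
  have hh0 : Tendsto (fun L => h (e L)) atTop (nhds 0) := by
    have := hcont.tendsto.comp he0
    simpa [hhdef, Function.comp_def] using this
  have hg : Tendsto (fun L => (A - h (e L))⁻¹) atTop (nhds A⁻¹) := by
    have := (tendsto_const_nhds.sub hh0).inv₀ (by simpa using hA.ne')
    simpa using this
  -- the model function G tends to 1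
  have hs2 : s ^ 2 * A ^ 2 = 2 * ((k:ℝ) - 1) := by
    rw [hsdef, div_pow, div_mul_cancel₀ _ (pow_ne_zero 2 hA.ne')]
    exact hsq
  have hval1 : m / (A * s) * ρ * A⁻¹ + 1 / 2 = 1 := by
    rw [hmdef]
    have hk0 : (k:ℝ) - 1 ≠ 0 := by linarith
    field_simp
    nlinarith [hs2]
  have hG : Tendsto (fun L => m / (A * s) * (h (e L) / e L) * (A - h (e L))⁻¹ + 1 / 2)
      atTop (nhds 1) := by
    have := (((tendsto_const_nhds : Tendsto (fun _ : ℝ => m / (A * s)) atTop _).mul hQ).mul hg).add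
      (tendsto_const_nhds : Tendsto (fun _ : ℝ => (1:ℝ)/2) atTop _)
    rwa [hval1] at this
  -- eventual equality of the ratio with G
  have hev : ∀ᶠ L in atTop,
      ((2 * L / ((fun w => (1 + ρ) * (1 - ((k:ℝ) - 1) / (w * ρ))) (Real.sqrt L * Real.sqrt (2 * ((k:ℝ) - 1)) / A) - 1 -
          Real.log ((fun w => (1 + ρ) * (1 - ((k:ℝ) - 1) / (w * ρ))) (Real.sqrt L * Real.sqrt (2 * ((k:ℝ) - 1)) / A))) +
        Real.sqrt L * Real.sqrt (2 * ((k:ℝ) - 1)) / A) - 2 * L / A) /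
        (Real.sqrt L * (2 * Real.sqrt (2 * ((k:ℝ) - 1))) / A)
      = m / (A * s) * (h (e L) / e L) * (A - h (e L))⁻¹ + 1 / 2 := by
    filter_upwards [eventually_ge_atTop (1:ℝ),
      he0.eventually_lt_const (by norm_num : (0:ℝ) < 1/2),
      hh0.eventually_lt_const hA] with L hL heL hhL
    have hx : 0 < Real.sqrt L := Real.sqrt_pos.2 (by linarith)
    have hx2 : Real.sqrt L * Real.sqrt L = L := Real.mul_self_sqrt (by linarith)
    set x := Real.sqrt L with hxdef
    have hw : x * Real.sqrt (2 * ((k:ℝ) - 1)) / A = s * x := by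
      rw [hsdef]; ring
    have heq : e L = m / x := rfl
    have heL' : e L < 1/2 := heL
    have hepos : 0 < e L := div_pos hm hx
    -- rewrite c at wstar
    have hcw : ((k:ℝ) - 1) / ((x * Real.sqrt (2 * ((k:ℝ) - 1)) / A) * ρ) = e L := by
      rw [hw, heq, hmdef, div_div]
      ring_nf
    rw [hcw]
    have h1e : 0 < 1 - e L := by linarith
    have hlogmul : Real.log ((1 + ρ) * (1 - e L)) = Real.log (1 + ρ) + Real.log (1 - e L) :=
      Real.log_mul (by linarith) (ne_of_gt h1e)
    have hden : (1 + ρ) * (1 - e L) - 1 - Real.log ((1 + ρ) * (1 - e L)) = A - h (e L) := by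
      rw [hlogmul]; simp only [hAdef, hhdef]; ring
    rw [hden, hw]
    have hAh : (0:ℝ) < A - h (e L) := by linarith
    have hsA : Real.sqrt (2 * ((k:ℝ) - 1)) = s * A := by
      rw [hsdef]; field_simp
    rw [hsA, heq]
    have hL' : L = x * x := hx2.symm
    rw [hL']
    have hne : A - h (m / x) ≠ 0 := by rw [← heq]; exact hAh.ne'
    generalize h (m / x) = u at hne ⊢
    field_simp
    ring
  constructor
  · -- first part: tends to atTop
    have hD : Tendsto (fun L => Real.sqrt L * (2 * Real.sqrt (2 * ((k:ℝ) - 1))) / A)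
        atTop atTop := by
      have h2s : 0 < 2 * Real.sqrt (2 * ((k:ℝ) - 1)) / A :=
        div_pos (by positivity) hA
      have := hsqrt.atTop_mul_pos h2s tendsto_const_nhds
      refine this.congr fun L => ?_
      ring
    have hR : Tendsto (fun L =>
        ((2 * L / ((fun w => (1 + ρ) * (1 - ((k:ℝ) - 1) / (w * ρ))) (Real.sqrt L * Real.sqrt (2 * ((k:ℝ) - 1)) / A) - 1 -
            Real.log ((fun w => (1 + ρ) * (1 - ((k:ℝ) - 1) / (w * ρ))) (Real.sqrt L * Real.sqrt (2 * ((k:ℝ) - 1)) / A))) +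
          Real.sqrt L * Real.sqrt (2 * ((k:ℝ) - 1)) / A) - 2 * L / A) /
          (Real.sqrt L * (2 * Real.sqrt (2 * ((k:ℝ) - 1))) / A)) atTop (nhds 1) :=
      hG.congr' (hev.mono fun L hL => hL.symm)
    have := hR.pos_mul_atTop one_pos hD
    refine this.congr' ?_
    filter_upwards [eventually_ge_atTop (1:ℝ)] with L hL
    have hx : 0 < Real.sqrt L := Real.sqrt_pos.2 (by linarith)
    have hDL : Real.sqrt L * (2 * Real.sqrt (2 * ((k:ℝ) - 1))) / A ≠ 0 := by
      have : 0 < Real.sqrt (2 * ((k:ℝ) - 1)) := Real.sqrt_pos.2 (by linarith)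
      positivity
    exact div_mul_cancel₀ _ hDL
  · exact hG.congr' (hev.mono fun L hL => hL.symm)
end
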